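/- A real symmetric 2×2 matrix Σ satisfies Σ + i·J ≥ 0 (as a complex Hermitian matrix) if and only if Σ ≥ 0 and det Σ ≥ 1, where J = [[0,1],[-1,0]]. -/

import Mathlib

open Matrix Complex ComplexOrder

/-- The standard symplectic 2×2 matrix `J = [[0,1],[-1,0]]`, as a complex matrix. -/
def JmatC : Matrix (Fin 2) (Fin 2) ℂ := !![0, 1; -1, 0]

private lemma quad_aux (a b c p q r s : ℝ) (_ha : 0 ≤ a) (hc : 0 ≤ c)
    (hd : b ^ 2 + 1 ≤ a * c) :
    0 ≤ a * (p ^ 2 + q ^ 2) + c * (r ^ 2 + s ^ 2) + 2 * b * (p * r + q * s)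
      - 2 * (p * s - q * r) := by
  have hapos : 0 < a := by nlinarith
  nlinarith [sq_nonneg (a * p + b * r - s), sq_nonneg (a * q + b * s + r),
    mul_nonneg (by nlinarith : (0:ℝ) ≤ a * c - b ^ 2 - 1)
      (by positivity : (0:ℝ) ≤ r ^ 2 + s ^ 2)]

/-- A real symmetric 2×2 matrix `Σ` satisfies `Σ + i·J ≥ 0` (as a complex Hermitian
matrix) if and only if `Σ ≥ 0` and `det Σ ≥ 1`. -/
theorem sigma_add_I_J_posSemidef_iff (S : Matrix (Fin 2) (Fin 2) ℝ)
    (hS : S.IsSymm) :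
    (S.map (fun a => (a : ℂ)) + Complex.I • JmatC).PosSemidef ↔
      S.PosSemidef ∧ 1 ≤ S.det := by
  set a : ℝ := S 0 0 with ha_def
  set b : ℝ := S 0 1 with hb_def
  set c : ℝ := S 1 1 with hc_def
  have hb : S 1 0 = b := hS.apply 0 1
  have hdet2 : S.det = a * c - b * b := by
    rw [Matrix.det_fin_two, hb]
  set M : Matrix (Fin 2) (Fin 2) ℂ := S.map (fun a => (a : ℂ)) + Complex.I • JmatC with hM
  have hre : ∀ x : Fin 2 → ℂ, (star x ⬝ᵥ (M *ᵥ x)).re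
      = a * ((x 0).re ^ 2 + (x 0).im ^ 2) + c * ((x 1).re ^ 2 + (x 1).im ^ 2)
        + 2 * b * ((x 0).re * (x 1).re + (x 0).im * (x 1).im)
        - 2 * ((x 0).re * (x 1).im - (x 0).im * (x 1).re) := by
    intro x
    simp [hM, JmatC, dotProduct, mulVec, Fin.sum_univ_two, Matrix.map_apply, hb,
      Complex.add_re, Complex.add_im, Complex.mul_re, Complex.mul_im, Complex.ext_iff]
    ring
  have him : ∀ x : Fin 2 → ℂ, (star x ⬝ᵥ (M *ᵥ x)).im = 0 := by
    intro x
    simp [hM, JmatC, dotProduct, mulVec, Fin.sum_univ_two, Matrix.map_apply, hb,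
      Complex.add_re, Complex.add_im, Complex.mul_re, Complex.mul_im, Complex.ext_iff]
    ring
  rw [Matrix.posSemidef_iff_dotProduct_mulVec, Matrix.posSemidef_iff_dotProduct_mulVec]
  constructor
  · rintro ⟨hH, hq⟩
    have h1 : ∀ p q r s : ℝ,
        0 ≤ a * (p ^ 2 + q ^ 2) + c * (r ^ 2 + s ^ 2) + 2 * b * (p * r + q * s)
          - 2 * (p * s - q * r) := by
      intro p q r s
      have := (Complex.le_def.mp (hq ![⟨p, q⟩, ⟨r, s⟩])).1
      rw [hre ![⟨p, q⟩, ⟨r, s⟩]] at this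
      simpa using this
    have ha : 0 ≤ a := by have := h1 1 0 0 0; nlinarith
    have hc : 0 ≤ c := by have := h1 0 0 1 0; nlinarith
    have hB := h1 0 (-(c + 1) / 2) 1 0
    have hA := h1 (-b) (-1) a 0
    have hapos : 0 < a := by nlinarith [sq_nonneg (c + 1)]
    have hdet : 1 ≤ a * c - b * b := by nlinarith
    refine ⟨⟨?_, ?_⟩, by rw [hdet2]; exact hdet⟩
    · rw [Matrix.IsHermitian, Matrix.conjTranspose_eq_transpose_of_trivial]; exact hS
    · intro x
      have : star x ⬝ᵥ (S *ᵥ x) = a * (x 0) ^ 2 + 2 * b * (x 0 * x 1) + c * (x 1) ^ 2 := by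
        simp only [dotProduct, mulVec, Fin.sum_univ_two, Pi.star_apply, star_trivial, hb]
        ring
      rw [this]
      nlinarith [sq_nonneg (a * x 0 + b * x 1), sq_nonneg (x 1), hapos.le]
  · rintro ⟨⟨hH, hq⟩, hdet⟩
    have ha : 0 ≤ a := by
      have := hq ![1, 0]
      simpa [dotProduct, mulVec, Fin.sum_univ_two] using this
    have hc : 0 ≤ c := by
      have := hq ![0, 1]
      simpa [dotProduct, mulVec, Fin.sum_univ_two] using this
    have hdet' : b ^ 2 + 1 ≤ a * c := by rw [hdet2] at hdet; nlinarith
    constructor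
    · ext i j
      rw [Matrix.conjTranspose_apply]
      fin_cases i <;> fin_cases j <;>
        simp [hM, JmatC, Matrix.map_apply, hb, hb_def]
    · intro x
      rw [Complex.le_def]
      refine ⟨?_, ?_⟩
      · rw [hre x]
        simpa using quad_aux a b c (x 0).re (x 0).im (x 1).re (x 1).im ha hc hdet'
      · rw [him x]; simp
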